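/- Let X be a finite-dimensional real inner product space, let P₁ : X → ℝ be convex, let a, x⁰, v ∈ X, let L_f > 0, L_g > 0, μ > 0, λ ≥ 0, and c ∈ ℝ, and define g(x) := c + ⟨v, x − x⁰⟩ + (L_g/(2μ))·‖x − x⁰‖². Suppose x* ∈ X minimizes over X the function L(x) := P₁(x) + ⟨a, x − x⁰⟩ + (L_f/2)·‖x − x⁰‖² + λ·g(x), and that λ·g(x*) = 0. Then for all x ∈ X: P₁(x*) ≤ P₁(x) + ⟨a, x − x*⟩ + λ·g(x) + (L_f/2)·‖x − x⁰‖² − (λ·L_g/(2μ))·‖x − x*‖². -/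

import Mathlib

open scoped InnerProductSpace

lemma expand_sq {X : Type*} [NormedAddCommGroup X] [InnerProductSpace ℝ X]
    (s t : ℝ) (u w : X) :
    ‖s • u + t • w‖ ^ 2 = s ^ 2 * ‖u‖ ^ 2 + 2 * s * t * ⟪u, w⟫_ℝ + t ^ 2 * ‖w‖ ^ 2 := by
  rw [norm_add_sq_real, norm_smul, norm_smul, real_inner_smul_left, real_inner_smul_right,
    mul_pow, mul_pow, Real.norm_eq_abs, Real.norm_eq_abs, sq_abs, sq_abs]
  ring

theorem mba_subproblem_minimizer_inequality
    {X : Type*} [NormedAddCommGroup X] [InnerProductSpace ℝ X] [FiniteDimensional ℝ X]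
    (P₁ : X → ℝ) (hP₁ : ConvexOn ℝ Set.univ P₁)
    (a x0 v : X) (Lf Lg μ lam c : ℝ)
    (hLf : 0 < Lf) (hLg : 0 < Lg) (hμ : 0 < μ) (hlam : 0 ≤ lam)
    (g : X → ℝ) (hg : ∀ x : X, g x = c + ⟪v, x - x0⟫_ℝ + Lg / (2 * μ) * ‖x - x0‖ ^ 2)
    (xs : X)
    (hmin : ∀ x : X,
      P₁ xs + ⟪a, xs - x0⟫_ℝ + Lf / 2 * ‖xs - x0‖ ^ 2 + lam * g xs ≤
      P₁ x + ⟪a, x - x0⟫_ℝ + Lf / 2 * ‖x - x0‖ ^ 2 + lam * g x)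
    (hcomp : lam * g xs = 0) :
    ∀ x : X, P₁ xs ≤ P₁ x + ⟪a, x - xs⟫_ℝ + lam * g x
      + Lf / 2 * ‖x - x0‖ ^ 2 - lam * Lg / (2 * μ) * ‖x - xs‖ ^ 2 := by
  intro x
  set K : ℝ := Lg / (2 * μ) with hK
  have hK0 : 0 < K := by positivity
  have hm0 : 0 < Lf + 2 * lam * K := by positivity
  set t : ℝ := Lf / (Lf + 2 * lam * K) with ht
  have ht0 : 0 < t := div_pos hLf hm0
  have ht1 : t ≤ 1 := by
    rw [ht, div_le_one hm0]
    nlinarith [mul_nonneg (mul_nonneg (by norm_num : (0:ℝ) ≤ 2) hlam) hK0.le]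
  have htm : t * (Lf + 2 * lam * K) = Lf := div_mul_cancel₀ Lf hm0.ne'
  set y : X := (1 - t) • xs + t • x with hy
  have h1 := hmin y
  have hconv := hP₁.2 (Set.mem_univ xs) (Set.mem_univ x) (by linarith : (0:ℝ) ≤ 1 - t)
    ht0.le (by ring)
  rw [← hy, smul_eq_mul, smul_eq_mul] at hconv
  have hyx : y - x0 = (1 - t) • (xs - x0) + t • (x - x0) := by
    rw [hy]; module
  have e1 : ‖y - x0‖ ^ 2 = (1 - t) ^ 2 * ‖xs - x0‖ ^ 2
      + 2 * (1 - t) * t * ⟪xs - x0, x - x0⟫_ℝ + t ^ 2 * ‖x - x0‖ ^ 2 := by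
    rw [hyx, expand_sq]
  have e2 : ‖x - xs‖ ^ 2 = ‖x - x0‖ ^ 2 - 2 * ⟪xs - x0, x - x0⟫_ℝ + ‖xs - x0‖ ^ 2 := by
    have h : x - xs = (x - x0) - (xs - x0) := by abel
    rw [h, norm_sub_sq_real, real_inner_comm]
  have e3 : ⟪a, y - x0⟫_ℝ = (1 - t) * ⟪a, xs - x0⟫_ℝ + t * ⟪a, x - x0⟫_ℝ := by
    rw [hyx, inner_add_right, real_inner_smul_right, real_inner_smul_right]
  have e4 : ⟪v, y - x0⟫_ℝ = (1 - t) * ⟪v, xs - x0⟫_ℝ + t * ⟪v, x - x0⟫_ℝ := by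
    rw [hyx, inner_add_right, real_inner_smul_right, real_inner_smul_right]
  have e5 : ⟪a, x - xs⟫_ℝ = ⟪a, x - x0⟫_ℝ - ⟪a, xs - x0⟫_ℝ := by
    rw [← inner_sub_right]; congr 1; abel
  rw [hg x]
  rw [hg xs] at h1 hcomp
  rw [hg y, e1, e3, e4] at h1
  have hrw : lam * Lg / (2 * μ) = lam * K := by rw [hK]; ring
  rw [hrw, e5, e2]
  set A := ‖xs - x0‖ ^ 2 with hA
  set B := ‖x - x0‖ ^ 2 with hB
  set C := ⟪xs - x0, x - x0⟫_ℝ with hC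
  have hA0 : 0 ≤ A := by positivity
  have eA2 : t * (t * (Lf + 2 * lam * K)) * A = t * Lf * A := by rw [htm]
  have eB2 : t * (t * (Lf + 2 * lam * K)) * B = t * Lf * B := by rw [htm]
  have eC2 : t * (t * (Lf + 2 * lam * K)) * C = t * Lf * C := by rw [htm]
  have hcomp2 := mul_eq_zero_of_right t hcomp
  have key : t * P₁ xs ≤ t * (P₁ x + (⟪a, x - x0⟫_ℝ - ⟪a, xs - x0⟫_ℝ)
      + lam * (c + ⟪v, x - x0⟫_ℝ + K * B) + Lf / 2 * B
      - lam * K * (B - 2 * C + A)) := by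
    linarith [h1, hconv, eA2, eB2, eC2, hcomp2,
      mul_nonneg (mul_nonneg ht0.le hLf.le) hA0]
  have := (mul_le_mul_iff_right₀ ht0).mp key
  linarith
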